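/- Let f : ℝ^{nd} → ℝ be a finite sum f = Σ_{F ∈ P(E)} P_F · ∏_{uv ∈ F} D_{u,v}, where E is a set of unordered pairs of distinct vertices, each P_F is a rational function with integer coefficients, and D_{u,v}(x) = ‖x_u − x_v‖. If f vanishes at some generic point x ∈ ℝ^{nd} (with d ≥ 2), then all coefficient functions P_F are zero, i.e., f is identically zero on its domain. -/

import Mathlib

open Finset

namespace GenericVanish

variable {ι : Type*} [DecidableEq ι] (K : Subfield ℝ) (a : ι → ℝ)

/-- The `K`-span of the square-root products over subsets of `s`. -/
def Sp (s : Finset ι) : Set ℝ :=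
  {z | ∃ c : Finset ι → ℝ, (∀ T ∈ s.powerset, c T ∈ K) ∧
    z = ∑ T ∈ s.powerset, c T * ∏ i ∈ T, a i}

lemma mem_Sp_of_mem {s : Finset ι} {z : ℝ} (hz : z ∈ K) : z ∈ Sp K a s := by
  refine ⟨fun T => if T = ∅ then z else 0, ?_, ?_⟩
  · intro T _; dsimp only; split
    · exact hz
    · exact K.zero_mem
  · rw [Finset.sum_eq_single ∅] <;> simp +contextual

lemma Sp_mono {s t : Finset ι} (hst : s ⊆ t) : Sp K a s ⊆ Sp K a t := by
  rintro z ⟨c, hc, rfl⟩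
  refine ⟨fun T => if T ∈ s.powerset then c T else 0, ?_, ?_⟩
  · intro T _; dsimp only; split
    · exact hc _ ‹_›
    · exact K.zero_mem
  · rw [← Finset.sum_subset (Finset.powerset_mono.2 hst)
      (fun T _ hT => by beta_reduce; rw [if_neg hT, zero_mul])]
    exact Finset.sum_congr rfl fun T hT => by beta_reduce; rw [if_pos hT]

lemma add_mem_Sp {s : Finset ι} {z w : ℝ} (hz : z ∈ Sp K a s) (hw : w ∈ Sp K a s) :
    z + w ∈ Sp K a s := by
  obtain ⟨c, hc, rfl⟩ := hz; obtain ⟨d, hd, rfl⟩ := hw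
  refine ⟨fun T => c T + d T, fun T hT => K.add_mem (hc T hT) (hd T hT), ?_⟩
  rw [← Finset.sum_add_distrib]
  exact Finset.sum_congr rfl fun T _ => by ring

lemma smul_mem_Sp {s : Finset ι} {u z : ℝ} (hu : u ∈ K) (hz : z ∈ Sp K a s) :
    u * z ∈ Sp K a s := by
  obtain ⟨c, hc, rfl⟩ := hz
  refine ⟨fun T => u * c T, fun T hT => K.mul_mem hu (hc T hT), ?_⟩
  rw [Finset.mul_sum]
  exact Finset.sum_congr rfl fun T _ => by ring

lemma neg_mem_Sp {s : Finset ι} {z : ℝ} (hz : z ∈ Sp K a s) : -z ∈ Sp K a s := by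
  simpa using smul_mem_Sp K a (K.neg_mem K.one_mem) hz

lemma pi_mem_Sp {s T : Finset ι} (hT : T ∈ s.powerset) : (∏ i ∈ T, a i) ∈ Sp K a s := by
  refine ⟨fun U => if U = T then 1 else 0, ?_, ?_⟩
  · intro U _; dsimp only; split
    · exact K.one_mem
    · exact K.zero_mem
  · rw [Finset.sum_eq_single T]
    · simp
    · intro U _ hUT; dsimp only; rw [if_neg hUT, zero_mul]
    · intro h; exact absurd hT h

lemma prod_mul_prod (T U : Finset ι) :
    (∏ i ∈ T, a i) * ∏ i ∈ U, a i
      = (∏ i ∈ T ∩ U, (a i) ^ 2) * ∏ i ∈ (T \ U) ∪ (U \ T), a i := by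
  have h1 : (∏ i ∈ T, a i) = (∏ i ∈ T \ U, a i) * ∏ i ∈ T ∩ U, a i :=
    (Finset.prod_sdiff (Finset.inter_subset_left)).symm.trans (by rw [Finset.sdiff_inter_self_left])
  have h2 : (∏ i ∈ U, a i) = (∏ i ∈ U \ T, a i) * ∏ i ∈ U ∩ T, a i :=
    (Finset.prod_sdiff (Finset.inter_subset_left)).symm.trans (by rw [Finset.sdiff_inter_self_left])
  rw [h1, h2, Finset.prod_union (disjoint_sdiff_sdiff),
    Finset.inter_comm U T]
  simp only [pow_two, Finset.prod_mul_distrib]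
  ring

lemma mul_mem_Sp {s : Finset ι} (hsq : ∀ i ∈ s, (a i) ^ 2 ∈ K) {z w : ℝ}
    (hz : z ∈ Sp K a s) (hw : w ∈ Sp K a s) : z * w ∈ Sp K a s := by
  classical
  obtain ⟨c, hc, rfl⟩ := hz; obtain ⟨d, hd, rfl⟩ := hw
  set P := s.powerset with hP
  set δ : Finset ι × Finset ι → Finset ι := fun p => (p.1 \ p.2) ∪ (p.2 \ p.1) with hδ
  have hmaps : ∀ p ∈ P ×ˢ P, δ p ∈ P := by
    rintro ⟨T, U⟩ hp
    rw [Finset.mem_product] at hp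
    rw [hP, Finset.mem_powerset]
    exact Finset.union_subset (Finset.sdiff_subset.trans (Finset.mem_powerset.1 hp.1))
      (Finset.sdiff_subset.trans (Finset.mem_powerset.1 hp.2))
  refine ⟨fun G => ∑ p ∈ (P ×ˢ P).filter (fun p => δ p = G),
      c p.1 * d p.2 * ∏ i ∈ p.1 ∩ p.2, (a i) ^ 2, ?_, ?_⟩
  · intro G _
    refine K.sum_mem fun p hp => ?_
    rw [Finset.mem_filter, Finset.mem_product] at hp
    refine K.mul_mem (K.mul_mem (hc _ hp.1.1) (hd _ hp.1.2)) (K.prod_mem fun i hi => ?_)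
    exact hsq i (Finset.mem_powerset.1 hp.1.1 (Finset.mem_inter.1 hi).1)
  · rw [Finset.sum_mul_sum]
    rw [← Finset.sum_product' (s := P) (t := P)
      (f := fun T U => (c T * ∏ i ∈ T, a i) * (d U * ∏ i ∈ U, a i))]
    rw [← Finset.sum_fiberwise_of_maps_to hmaps
      (fun p => (c p.1 * ∏ i ∈ p.1, a i) * (d p.2 * ∏ i ∈ p.2, a i))]
    refine Finset.sum_congr rfl fun G _ => ?_
    rw [Finset.sum_mul]
    refine Finset.sum_congr rfl fun p hp => ?_
    rw [Finset.mem_filter] at hp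
    rw [← hp.2]
    have := prod_mul_prod a p.1 p.2
    calc (c p.1 * ∏ i ∈ p.1, a i) * (d p.2 * ∏ i ∈ p.2, a i)
        = c p.1 * d p.2 * ((∏ i ∈ p.1, a i) * ∏ i ∈ p.2, a i) := by ring
      _ = c p.1 * d p.2 * ((∏ i ∈ p.1 ∩ p.2, (a i) ^ 2) * ∏ i ∈ δ p, a i) := by rw [this]
      _ = (c p.1 * d p.2 * ∏ i ∈ p.1 ∩ p.2, (a i) ^ 2) * ∏ i ∈ δ p, a i := by ring


lemma sum_powerset_cons {i : ι} {s : Finset ι} (hi : i ∉ s) (f : Finset ι → ℝ) :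
    ∑ T ∈ (Finset.cons i s hi).powerset, f T
      = (∑ T ∈ s.powerset, f T) + ∑ T ∈ s.powerset, f (insert i T) := by
  rw [Finset.cons_eq_insert, Finset.powerset_insert, Finset.sum_union, Finset.sum_image]
  · intro T hT U hU hTU
    rw [Finset.mem_coe, Finset.mem_powerset] at hT hU
    have hT' : T = (insert i T).erase i := by
      rw [Finset.erase_insert (fun hiT => hi (hT hiT))]
    have hU' : U = (insert i U).erase i := by
      rw [Finset.erase_insert (fun hiU => hi (hU hiU))]
    rw [hT', hU', hTU]
  · rw [Finset.disjoint_right]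
    intro T hT hT'
    rw [Finset.mem_image] at hT
    obtain ⟨U, hU, rfl⟩ := hT
    rw [Finset.mem_powerset] at hT'
    exact hi (hT' (Finset.mem_insert_self i U))

lemma mem_Sp_cons_elim {i : ι} {s : Finset ι} (hi : i ∉ s) {z : ℝ}
    (hz : z ∈ Sp K a (Finset.cons i s hi)) :
    ∃ A ∈ Sp K a s, ∃ B ∈ Sp K a s, z = A + B * a i := by
  obtain ⟨c, hc, rfl⟩ := hz
  refine ⟨∑ T ∈ s.powerset, c T * ∏ j ∈ T, a j, ⟨c, fun T hT => ?_, rfl⟩,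
    ∑ T ∈ s.powerset, c (insert i T) * ∏ j ∈ T, a j,
    ⟨fun T => c (insert i T), fun T hT => ?_, rfl⟩, ?_⟩
  · exact hc T (Finset.powerset_mono.2 (Finset.subset_cons hi) hT)
  · refine hc (insert i T) ?_
    rw [Finset.mem_powerset] at hT ⊢
    rw [Finset.cons_eq_insert]
    exact Finset.insert_subset_insert i hT
  · rw [sum_powerset_cons hi]
    congr 1
    rw [Finset.sum_mul]
    refine Finset.sum_congr rfl fun T hT => ?_
    rw [Finset.mem_powerset] at hT
    rw [Finset.prod_insert (fun hiT => hi (hT hiT))]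
    ring


theorem multiquad_ind (s : Finset ι) :
    (∀ i ∈ s, (a i) ^ 2 ∈ K) →
    (∀ T ⊆ s, T.Nonempty → (∏ i ∈ T, a i) ∉ K) →
    ((∀ c : Finset ι → ℝ, (∀ T ∈ s.powerset, c T ∈ K) →
        ∑ T ∈ s.powerset, c T * ∏ i ∈ T, a i = 0 → ∀ T ∈ s.powerset, c T = 0)
      ∧ (∀ z ∈ Sp K a s, z ≠ 0 → z⁻¹ ∈ Sp K a s)
      ∧ (∀ z ∈ Sp K a s, (z ^ 2) ∈ K → ∃ T ⊆ s, ∃ u ∈ K, z = u * ∏ i ∈ T, a i)) := by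
  induction s using Finset.cons_induction with
  | empty =>
    intro hsq hne
    refine ⟨?_, ?_, ?_⟩
    · intro c hc hrel T hT
      rw [Finset.powerset_empty, Finset.sum_singleton, Finset.prod_empty, mul_one] at hrel
      rw [Finset.powerset_empty, Finset.mem_singleton] at hT
      rw [hT]; exact hrel
    · intro z hz hz0
      obtain ⟨c, hc, rfl⟩ := hz
      rw [Finset.powerset_empty, Finset.sum_singleton, Finset.prod_empty, mul_one]
      exact mem_Sp_of_mem K a (K.inv_mem (hc ∅ (by simp)))
    · intro z hz hzsq
      obtain ⟨c, hc, rfl⟩ := hz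
      rw [Finset.powerset_empty, Finset.sum_singleton, Finset.prod_empty, mul_one]
      exact ⟨∅, Finset.Subset.refl _, c ∅, hc ∅ (by simp), by rw [Finset.prod_empty, mul_one]⟩
  | cons i s hi IH =>
    intro hsq hne
    have hsq' : ∀ j ∈ s, (a j) ^ 2 ∈ K := fun j hj => hsq j (Finset.mem_cons_of_mem hj)
    have hne' : ∀ T ⊆ s, T.Nonempty → (∏ j ∈ T, a j) ∉ K :=
      fun T hT hTne => hne T (hT.trans (Finset.subset_cons hi)) hTne
    obtain ⟨L, I, S⟩ := IH hsq' hne'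
    have hsqi : (a i) ^ 2 ∈ K := hsq i (Finset.mem_cons_self i s)
    -- the new square root is not in the old span
    have hai : a i ∉ Sp K a s := by
      intro hmem
      obtain ⟨T, hTs, u, hu, hT⟩ := S _ hmem hsqi
      have hiT : i ∉ T := fun h => hi (hTs h)
      refine hne (insert i T) ?_ (Finset.insert_nonempty i T) ?_
      · rw [Finset.cons_eq_insert]
        exact Finset.insert_subset_insert i hTs
      · have : (∏ j ∈ insert i T, a j) = u * ∏ j ∈ T, (a j) ^ 2 := by
          rw [Finset.prod_insert hiT, hT, Finset.prod_pow]
          ring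
        rw [this]
        exact K.mul_mem hu (K.prod_mem fun j hj => hsq' j (hTs hj))
    have haiSp : a i ∈ Sp K a (Finset.cons i s hi) := by
      have h1 : a i = ∏ j ∈ ({i} : Finset ι), a j := by rw [Finset.prod_singleton]
      rw [h1]
      exact pi_mem_Sp K a (by
        rw [Finset.mem_powerset, Finset.singleton_subset_iff]
        exact Finset.mem_cons_self i s)
    refine ⟨?_, ?_, ?_⟩
    -- Linear independence
    · intro c hc hrel T hT
      have hcA : ∀ T ∈ s.powerset, c T ∈ K :=
        fun T hT => hc T (Finset.powerset_mono.2 (Finset.subset_cons hi) hT)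
      have hcB : ∀ T ∈ s.powerset, c (insert i T) ∈ K := by
        intro T hT
        refine hc (insert i T) ?_
        rw [Finset.mem_powerset] at hT ⊢
        rw [Finset.cons_eq_insert]
        exact Finset.insert_subset_insert i hT
      rw [sum_powerset_cons hi] at hrel
      have hrw : ∑ U ∈ s.powerset, c (insert i U) * ∏ j ∈ insert i U, a j
          = (∑ U ∈ s.powerset, c (insert i U) * ∏ j ∈ U, a j) * a i := by
        rw [Finset.sum_mul]
        refine Finset.sum_congr rfl fun U hU => ?_
        rw [Finset.mem_powerset] at hU
        rw [Finset.prod_insert (fun h => hi (hU h))]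
        ring
      rw [hrw] at hrel
      set A := ∑ U ∈ s.powerset, c U * ∏ j ∈ U, a j with hAdef
      set B := ∑ U ∈ s.powerset, c (insert i U) * ∏ j ∈ U, a j with hBdef
      by_cases hB : B = 0
      · have hA : A = 0 := by rw [hB] at hrel; simpa using hrel
        have h1 := L c hcA hA
        have h2 := L (fun U => c (insert i U)) hcB hB
        rw [Finset.mem_powerset, Finset.cons_eq_insert] at hT
        by_cases hiT : i ∈ T
        · have hTe : T = insert i (T.erase i) := (Finset.insert_erase hiT).symm
          rw [hTe]
          refine h2 _ ?_
          rw [Finset.mem_powerset]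
          intro j hj
          rw [Finset.mem_erase] at hj
          rcases Finset.mem_insert.1 (hT hj.2) with h | h
          · exact absurd h hj.1
          · exact h
        · refine h1 T ?_
          rw [Finset.mem_powerset]
          intro j hj
          rcases Finset.mem_insert.1 (hT hj) with h | h
          · exact absurd (h ▸ hj) hiT
          · exact h
      · exfalso
        apply hai
        have hAmem : A ∈ Sp K a s := ⟨c, hcA, hAdef⟩
        have hBmem : B ∈ Sp K a s := ⟨fun U => c (insert i U), hcB, hBdef⟩
        have hout : a i = -A * B⁻¹ := by
          field_simp
          linarith [hrel]
        rw [hout]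
        exact mul_mem_Sp K a hsq' (neg_mem_Sp K a hAmem) (I B hBmem hB)
    -- Inverses
    · intro z hz hz0
      obtain ⟨A, hA, B, hB, rfl⟩ := mem_Sp_cons_elim K a hi hz
      have hwSp : A ^ 2 - B ^ 2 * (a i) ^ 2 ∈ Sp K a s := by
        have h1 : A ^ 2 - B ^ 2 * (a i) ^ 2 = A * A + -((a i) ^ 2 * (B * B)) := by ring
        rw [h1]
        exact add_mem_Sp K a (mul_mem_Sp K a hsq' hA hA)
          (neg_mem_Sp K a (smul_mem_Sp K a hsqi (mul_mem_Sp K a hsq' hB hB)))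
      have hzw : (A + B * a i) * (A - B * a i) = A ^ 2 - B ^ 2 * (a i) ^ 2 := by ring
      have hwne : (A + B * a i) * (A - B * a i) ≠ 0 := by
        intro h0
        rcases mul_eq_zero.1 h0 with h | h
        · exact hz0 h
        · -- A = B * a i
          by_cases hB0 : B = 0
          · rw [hB0] at h
            apply hz0
            rw [hB0]
            simpa using h
          · apply hai
            have hout : a i = A * B⁻¹ := by
              field_simp
              linarith [h]
            rw [hout]
            exact mul_mem_Sp K a hsq' hA (I B hB hB0)
      have hinv : ((A + B * a i) * (A - B * a i))⁻¹ ∈ Sp K a s := by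
        rw [hzw]; rw [hzw] at hwne; exact I _ hwSp hwne
      have hw0 : (A - B * a i) ≠ 0 := right_ne_zero_of_mul hwne
      have hmain : (A + B * a i)⁻¹ = (A - B * a i) * ((A + B * a i) * (A - B * a i))⁻¹ := by
        rw [mul_inv]
        field_simp
      rw [hmain]
      have hwmem : A - B * a i ∈ Sp K a (Finset.cons i s hi) := by
        have h2 : A - B * a i = A + (-B) * a i := by ring
        rw [h2]
        exact add_mem_Sp K a (Sp_mono K a (Finset.subset_cons hi) hA)
          (mul_mem_Sp K a hsq (Sp_mono K a (Finset.subset_cons hi) (neg_mem_Sp K a hB)) haiSp)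
      exact mul_mem_Sp K a hsq hwmem (Sp_mono K a (Finset.subset_cons hi) hinv)
    -- Squares
    · intro z hz hzsq
      obtain ⟨A, hA, B, hB, rfl⟩ := mem_Sp_cons_elim K a hi hz
      have key : (2 * (A * B)) * a i ∈ Sp K a s := by
        have h1 : (2 * (A * B)) * a i
            = (A + B * a i) ^ 2 + -(A * A) + -((a i) ^ 2 * (B * B)) := by ring
        rw [h1]
        exact add_mem_Sp K a (add_mem_Sp K a (mem_Sp_of_mem K a hzsq)
            (neg_mem_Sp K a (mul_mem_Sp K a hsq' hA hA)))
          (neg_mem_Sp K a (smul_mem_Sp K a hsqi (mul_mem_Sp K a hsq' hB hB)))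
      by_cases hAB : A * B = 0
      · rcases mul_eq_zero.1 hAB with hA0 | hB0
        · by_cases hz0 : A + B * a i = 0
          · exact ⟨∅, Finset.empty_subset _, 0, K.zero_mem, by rw [hz0, Finset.prod_empty, mul_one]⟩
          · have ht0 : a i ≠ 0 := by
              intro h
              apply hz0
              rw [hA0, h, mul_zero, add_zero]
            have hBsq : B ^ 2 ∈ K := by
              have h2 : B ^ 2 = (A + B * a i) ^ 2 * ((a i) ^ 2)⁻¹ := by
                rw [hA0]
                field_simp
                ring
              rw [h2]
              exact K.mul_mem hzsq (K.inv_mem hsqi)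
            obtain ⟨T, hTs, u, hu, hBu⟩ := S B hB hBsq
            have hiT : i ∉ T := fun h => hi (hTs h)
            refine ⟨insert i T, ?_, u, hu, ?_⟩
            · rw [Finset.cons_eq_insert]
              exact Finset.insert_subset_insert i hTs
            · rw [Finset.prod_insert hiT, hA0, hBu]
              ring
        · obtain ⟨T, hTs, u, hu, hAu⟩ := S A hA (by
            have h3 : A ^ 2 = (A + B * a i) ^ 2 := by rw [hB0]; ring_nf
            rw [h3]; exact hzsq)
          exact ⟨T, hTs.trans (Finset.subset_cons hi), u, hu, by rw [hB0, hAu]; ring⟩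
      · exfalso
        apply hai
        have h2 : (2 : ℝ) * (A * B) ≠ 0 :=
          mul_ne_zero two_ne_zero hAB
        have hm : (2 * (A * B)) ∈ Sp K a s := by
          have h4 : (2:ℝ) ∈ K := by
            have := K.add_mem K.one_mem K.one_mem
            norm_num at this
            rw [← one_add_one_eq_two]; exact K.add_mem K.one_mem K.one_mem
          exact smul_mem_Sp K a h4 (mul_mem_Sp K a hsq' hA hB)
        have hout : a i = (2 * (A * B))⁻¹ * ((2 * (A * B)) * a i) := by
          rw [← mul_assoc, inv_mul_cancel₀ h2, one_mul]
        rw [hout]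
        exact mul_mem_Sp K a hsq' (I _ hm h2) key


/-- Infinite descent: if `p` is prime and `p ∤ c` then `p*c` times a nonzero square
is never a square. -/
lemma descent {R : Type*} [CommRing R] [IsDomain R] [WfDvdMonoid R]
    {p c : R} (hp : Prime p) (hc : ¬ p ∣ c) :
    ∀ b : R, b ≠ 0 → ∀ a : R, a ^ 2 = p * c * b ^ 2 → False := by
  intro b
  refine wellFounded_dvdNotUnit.induction
    (C := fun b => b ≠ 0 → ∀ a : R, a ^ 2 = p * c * b ^ 2 → False) b ?_
  intro b IH hb a heq
  have hpa : p ∣ a := by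
    refine hp.dvd_of_dvd_pow (n := 2) ?_
    rw [heq]
    exact ⟨c * b ^ 2, by ring⟩
  obtain ⟨a₁, rfl⟩ := hpa
  have heq2 : p * a₁ ^ 2 = c * b ^ 2 := by
    have hp0 : p ≠ 0 := hp.ne_zero
    apply mul_left_cancel₀ hp0
    calc p * (p * a₁ ^ 2) = (p * a₁) ^ 2 := by ring
      _ = p * c * b ^ 2 := heq
      _ = p * (c * b ^ 2) := by ring
  have hpb : p ∣ b := by
    have h1 : p ∣ c * b ^ 2 := ⟨a₁ ^ 2, heq2.symm⟩
    rcases hp.dvd_mul.1 h1 with h | h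
    · exact absurd h hc
    · exact hp.dvd_of_dvd_pow h
  obtain ⟨b₁, rfl⟩ := hpb
  have hb₁ : b₁ ≠ 0 := by rintro rfl; exact hb (by ring)
  refine IH b₁ ⟨hb₁, p, hp.not_unit, by ring⟩ hb₁ a₁ ?_
  have hp0 : p ≠ 0 := hp.ne_zero
  apply mul_left_cancel₀ hp0
  apply mul_left_cancel₀ hp0
  calc p * (p * a₁ ^ 2) = (p * a₁) ^ 2 := by ring
    _ = p * c * (p * b₁) ^ 2 := heq
    _ = p * (p * (p * c * b₁ ^ 2)) := by ring

/-- A monic quadratic `(X - b)^2 + c` over a UFD is irreducible provided `-c`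
is not a square in the fraction field. -/
lemma quad_irred {S : Type*} [CommRing S] [IsDomain S] [UniqueFactorizationMonoid S]
    (b c : S) (H : ∀ u v : S, v ≠ 0 → u ^ 2 + c * v ^ 2 ≠ 0) :
    Irreducible ((Polynomial.X - Polynomial.C b) ^ 2 + Polynomial.C c) := by
  classical
  have hdeg2 : ((Polynomial.X - Polynomial.C b) ^ 2 : Polynomial S).degree = 2 := by
    rw [Polynomial.degree_pow, Polynomial.degree_X_sub_C]
    rfl
  have hdegC : (Polynomial.C c : Polynomial S).degree < 2 := by
    refine lt_of_le_of_lt Polynomial.degree_C_le ?_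
    norm_num
  have hmonic : ((Polynomial.X - Polynomial.C b) ^ 2 + Polynomial.C c).Monic := by
    refine Polynomial.Monic.add_of_left ((Polynomial.monic_X_sub_C b).pow 2) ?_
    rw [hdeg2]; exact hdegC
  set F := FractionRing S
  rw [hmonic.irreducible_iff_irreducible_map_fraction_map (K := F)]
  set β := algebraMap S F with hβ
  have hmap : ((Polynomial.X - Polynomial.C b) ^ 2 + Polynomial.C c).map β
      = (Polynomial.X - Polynomial.C (β b)) ^ 2 + Polynomial.C (β c) := by
    simp [Polynomial.map_add, Polynomial.map_pow, Polynomial.map_sub]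
  rw [hmap]
  have hdeg2' : ((Polynomial.X - Polynomial.C (β b)) ^ 2 : Polynomial F).degree = 2 := by
    rw [Polynomial.degree_pow, Polynomial.degree_X_sub_C]
    rfl
  have hdegC' : (Polynomial.C (β c) : Polynomial F).degree < 2 := by
    refine lt_of_le_of_lt Polynomial.degree_C_le ?_
    norm_num
  have hdegq : ((Polynomial.X - Polynomial.C (β b)) ^ 2
      + Polynomial.C (β c) : Polynomial F).degree = 2 := by
    rw [Polynomial.degree_add_eq_left_of_degree_lt (by rw [hdeg2']; exact hdegC'), hdeg2']
  have hnd : ((Polynomial.X - Polynomial.C (β b)) ^ 2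
      + Polynomial.C (β c) : Polynomial F).natDegree = 2 :=
    Polynomial.natDegree_eq_of_degree_eq_some hdegq
  rw [Polynomial.irreducible_iff_roots_eq_zero_of_degree_le_three (by omega) (by omega)]
  rw [Multiset.eq_zero_iff_forall_notMem]
  intro t ht
  have hne0 : ((Polynomial.X - Polynomial.C (β b)) ^ 2
      + Polynomial.C (β c) : Polynomial F) ≠ 0 := by
    intro h
    rw [h] at hdegq
    simp at hdegq
  have hroot := Polynomial.isRoot_of_mem_roots ht
  have heval : (t - β b) ^ 2 + β c = 0 := by
    have := hroot
    simp [Polynomial.IsRoot, Polynomial.eval_add, Polynomial.eval_pow,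
      Polynomial.eval_sub] at this
    linear_combination this
  obtain ⟨u, v, hv, huv⟩ := IsFractionRing.div_surjective (A := S) (t - β b)
  have hvne : β v ≠ 0 := by
    intro h
    have := (IsFractionRing.injective S F) (by rw [h, map_zero] : β v = β 0)
    exact nonZeroDivisors.ne_zero hv this
  have hkey : β (u ^ 2 + c * v ^ 2) = 0 := by
    rw [map_add, map_mul, map_pow, map_pow]
    have h2 : (β u / β v) ^ 2 + β c = 0 := by rw [huv]; exact heval
    replace h2 : β u ^ 2 + β c * β v ^ 2 = 0 := by
      rw [show β u ^ 2 + β c * β v ^ 2 = ((β u / β v) ^ 2 + β c) * β v ^ 2 by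
        rw [add_mul, div_pow, div_mul_cancel₀ _ (pow_ne_zero 2 hvne)], h2, zero_mul]
    linear_combination h2
  have := (IsFractionRing.injective S F) (by rw [hkey, map_zero] : β (u ^ 2 + c * v ^ 2) = β 0)
  exact H u v (nonZeroDivisors.ne_zero hv) this


open MvPolynomial in
/-- The squared-distance polynomial attached to an edge. -/
noncomputable def qpoly (d n : ℕ) (e : Fin n × Fin n) : MvPolynomial (Fin n × Fin d) ℤ :=
  ∑ j : Fin d, (X (e.1, j) - X (e.2, j)) ^ 2

lemma aeval_qpoly {d n : ℕ} {A : Type*} [CommRing A] (f : Fin n × Fin d → A)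
    (e : Fin n × Fin n) :
    MvPolynomial.aeval f (qpoly d n e) = ∑ j : Fin d, (f (e.1, j) - f (e.2, j)) ^ 2 := by
  simp [qpoly]

open MvPolynomial in
lemma qpoly_prime {d n : ℕ} (hd : 2 ≤ d) (x : Fin n → Fin d → ℝ)
    (hgen : ∀ S : MvPolynomial (Fin n × Fin d) ℤ, S ≠ 0 →
      MvPolynomial.aeval (fun p : Fin n × Fin d => x p.1 p.2) S ≠ 0)
    (e : Fin n × Fin n) (he : e.1 < e.2) :
    Prime (qpoly d n e) := by
  classical
  have hne : e.1 ≠ e.2 := ne_of_lt he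
  have hd0 : 0 < d := by omega
  set x' : Fin n × Fin d → ℝ := fun p => x p.1 p.2 with hx'
  set j₀ : Fin d := ⟨0, hd0⟩ with hj₀
  set y : Fin n × Fin d := (e.1, j₀) with hy
  have hy2 : ∀ j : Fin d, (e.2, j) ≠ y := by
    intro j h
    rw [hy, Prod.mk.injEq] at h
    exact hne h.1.symm
  have hy1 : ∀ j : Fin d, j ≠ j₀ → (e.1, j) ≠ y := by
    intro j hj h
    rw [hy, Prod.mk.injEq] at h
    exact hj h.2
  let EQ : MvPolynomial (Fin n × Fin d) ℤ ≃ₐ[ℤ]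
      Polynomial (MvPolynomial {s : Fin n × Fin d // s ≠ y} ℤ) :=
    (MvPolynomial.renameEquiv ℤ (Equiv.optionSubtypeNe y).symm).trans
      (MvPolynomial.optionEquivLeft ℤ {s : Fin n × Fin d // s ≠ y})
  let κ : MvPolynomial (Fin n × Fin d) ℤ →ₐ[ℤ] MvPolynomial {s : Fin n × Fin d // s ≠ y} ℤ :=
    MvPolynomial.aeval (fun s => if h : s = y then 0 else MvPolynomial.X ⟨s, h⟩)
  have hκX : ∀ (s : Fin n × Fin d) (hs : s ≠ y), κ (X s) = MvPolynomial.X ⟨s, hs⟩ := by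
    intro s hs
    show MvPolynomial.aeval _ (X s) = _
    rw [MvPolynomial.aeval_X, dif_neg hs]
  have hEQX : ∀ (s : Fin n × Fin d), s ≠ y → EQ (X s) = Polynomial.C (κ (X s)) := by
    intro s hs
    show (MvPolynomial.optionEquivLeft ℤ _) ((MvPolynomial.renameEquiv ℤ _) (X s)) = _
    rw [MvPolynomial.renameEquiv_apply, MvPolynomial.rename_X,
      Equiv.optionSubtypeNe_symm_of_ne hs, MvPolynomial.optionEquivLeft_X_some, hκX s hs]
  have hEQy : EQ (X y) = Polynomial.X := by
    show (MvPolynomial.optionEquivLeft ℤ _) ((MvPolynomial.renameEquiv ℤ _) (X y)) = _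
    rw [MvPolynomial.renameEquiv_apply, MvPolynomial.rename_X,
      Equiv.optionSubtypeNe_symm_self, MvPolynomial.optionEquivLeft_X_none]
  set c' : MvPolynomial (Fin n × Fin d) ℤ :=
    ∑ j ∈ Finset.univ.erase j₀, (X (e.1, j) - X (e.2, j)) ^ 2 with hc'
  have hq : qpoly d n e = (X (e.1, j₀) - X (e.2, j₀)) ^ 2 + c' := by
    rw [qpoly, hc', ← Finset.add_sum_erase _ _ (Finset.mem_univ j₀)]
  have hEQq : EQ (qpoly d n e)
      = (Polynomial.X - Polynomial.C (κ (X (e.2, j₀)))) ^ 2 + Polynomial.C (κ c') := by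
    rw [hq, map_add, map_pow, map_sub]
    refine congrArg₂ HAdd.hAdd ?_ ?_
    · rw [hEQX _ (hy2 j₀), show ((e.1, j₀) : Fin n × Fin d) = y from hy.symm, hEQy]
    · rw [hc', map_sum, map_sum, map_sum]
      refine Finset.sum_congr rfl fun j hj => ?_
      have hj' : j ≠ j₀ := (Finset.mem_erase.1 hj).1
      rw [map_pow, map_sub, map_pow, map_sub, hEQX _ (hy1 j hj'), hEQX _ (hy2 j),
        ← map_sub, ← map_pow]
  have hH : ∀ u v : MvPolynomial {s : Fin n × Fin d // s ≠ y} ℤ,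
      v ≠ 0 → u ^ 2 + (κ c') * v ^ 2 ≠ 0 := by
    intro u v hv h0
    set ρ : MvPolynomial {s : Fin n × Fin d // s ≠ y} ℤ →ₐ[ℤ]
        MvPolynomial (Fin n × Fin d) ℤ := MvPolynomial.rename Subtype.val with hρ
    have hρinj : Function.Injective ρ := MvPolynomial.rename_injective _ Subtype.val_injective
    have hρκX : ∀ (s : Fin n × Fin d) (hs : s ≠ y), ρ (κ (X s)) = X s := by
      intro s hs
      rw [hκX s hs, hρ, MvPolynomial.rename_X]
    have hρκc : ρ (κ c') = c' := by
      rw [hc', map_sum, map_sum]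
      refine Finset.sum_congr rfl fun j hj => ?_
      have hj' : j ≠ j₀ := (Finset.mem_erase.1 hj).1
      rw [map_pow, map_sub, map_pow, map_sub, hρκX _ (hy1 j hj'), hρκX _ (hy2 j)]
    have h1 : MvPolynomial.aeval x' (ρ (u ^ 2 + (κ c') * v ^ 2)) = 0 := by
      rw [h0, map_zero, map_zero]
    rw [map_add, map_mul, map_pow, map_pow, map_add, map_mul, map_pow, map_pow, hρκc] at h1
    have hcpos : 0 < MvPolynomial.aeval x' c' := by
      rw [hc']
      simp only [map_sum, map_pow, map_sub, MvPolynomial.aeval_X]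
      have h1mem : (⟨1, by omega⟩ : Fin d) ∈ Finset.univ.erase j₀ := by
        rw [Finset.mem_erase]
        refine ⟨?_, Finset.mem_univ _⟩
        intro h
        rw [hj₀] at h
        exact absurd (congrArg Fin.val h) (by norm_num)
      refine Finset.sum_pos' (fun j _ => sq_nonneg _) ⟨⟨1, by omega⟩, h1mem, ?_⟩
      refine sq_pos_of_ne_zero ?_
      have hne1 : MvPolynomial.aeval x' ((X (e.1, (⟨1, by omega⟩ : Fin d))
          - X (e.2, (⟨1, by omega⟩ : Fin d))) : MvPolynomial (Fin n × Fin d) ℤ) ≠ 0 := by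
        refine hgen _ ?_
        refine sub_ne_zero_of_ne ?_
        intro h
        have h2 := MvPolynomial.X_injective (R := ℤ) h
        exact hne (Prod.ext_iff.1 h2).1
      rw [map_sub, MvPolynomial.aeval_X, MvPolynomial.aeval_X] at hne1
      exact hne1
    have hvne : MvPolynomial.aeval x' (ρ v) ≠ 0 := by
      refine hgen _ ?_
      intro h
      exact hv (hρinj (by rw [h, map_zero]))
    have hvpos : 0 < (MvPolynomial.aeval x' (ρ v)) ^ 2 := sq_pos_of_ne_zero hvne
    have h3 := mul_pos hcpos hvpos
    have h4 := sq_nonneg (MvPolynomial.aeval x' (ρ u))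
    linarith
  have hirr2 : Irreducible ((Polynomial.X - Polynomial.C (κ (X (e.2, j₀)))) ^ 2
      + Polynomial.C (κ c')) := quad_irred _ _ hH
  have hirrEQ : Irreducible (EQ (qpoly d n e)) := by rw [hEQq]; exact hirr2
  exact (UniqueFactorizationMonoid.irreducible_iff_prime).mp
    ((MulEquiv.irreducible_iff (EQ : MvPolynomial (Fin n × Fin d) ℤ ≃ₐ[ℤ] _)).mp hirrEQ)


open MvPolynomial in
lemma qpoly_not_dvd {d n : ℕ} (hd : 2 ≤ d) {e e' : Fin n × Fin n}
    (he : e.1 < e.2) (he' : e'.1 < e'.2) (hee : e ≠ e') :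
    ¬ qpoly d n e ∣ qpoly d n e' := by
  classical
  have hexists : ∃ w : Fin n, (w = e'.1 ∨ w = e'.2) ∧ w ≠ e.1 ∧ w ≠ e.2 := by
    rcases eq_or_ne e'.1 e.1 with h11 | h11
    · refine ⟨e'.2, Or.inr rfl, ?_, ?_⟩
      · intro hh
        rw [← h11] at hh
        exact (ne_of_gt he') hh
      · intro hh
        exact hee (Prod.ext h11 hh).symm
    · rcases eq_or_ne e'.1 e.2 with h12 | h12
      · refine ⟨e'.2, Or.inr rfl, ?_, ?_⟩
        · intro hh
          rw [hh] at he'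
          rw [h12] at he'
          exact absurd (he.trans he') (lt_irrefl _)
        · intro hh
          rw [hh] at he'
          rw [h12] at he'
          exact lt_irrefl _ he'
      · exact ⟨e'.1, Or.inl rfl, h11, h12⟩
  obtain ⟨w, hw, hw1, hw2⟩ := hexists
  intro hdvd
  obtain ⟨g, hg⟩ := hdvd
  set t : Fin n × Fin d → ℤ := fun s => if s.1 = w then 1 else 0 with ht
  have h1 : MvPolynomial.aeval t (qpoly d n e) = 0 := by
    rw [aeval_qpoly]
    refine Finset.sum_eq_zero fun j _ => ?_
    have ht1 : t (e.1, j) = 0 := by rw [ht]; exact if_neg (fun h => hw1 h.symm)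
    have ht2 : t (e.2, j) = 0 := by rw [ht]; exact if_neg (fun h => hw2 h.symm)
    rw [ht1, ht2]
    ring
  have h2 : MvPolynomial.aeval t (qpoly d n e') = (d : ℤ) := by
    rw [aeval_qpoly]
    have hterm : ∀ j : Fin d, (t (e'.1, j) - t (e'.2, j)) ^ 2 = 1 := by
      intro j
      rcases hw with h | h
      · have ht1 : t (e'.1, j) = 1 := by rw [ht]; exact if_pos h.symm
        have ht2 : t (e'.2, j) = 0 := by
          rw [ht]
          refine if_neg (fun hh => ?_)
          rw [h] at hh
          exact (ne_of_gt he') hh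
        rw [ht1, ht2]
        ring
      · have ht1 : t (e'.1, j) = 0 := by
          rw [ht]
          refine if_neg (fun hh => ?_)
          rw [h] at hh
          exact (ne_of_lt he') hh
        have ht2 : t (e'.2, j) = 1 := by rw [ht]; exact if_pos h.symm
        rw [ht1, ht2]
        ring
    rw [Finset.sum_congr rfl (fun j _ => hterm j)]
    simp
  rw [hg, map_mul, h1, zero_mul] at h2
  have hd0 : (d : ℤ) ≠ 0 := by
    have : (0:ℤ) < (d:ℤ) := by exact_mod_cast Nat.lt_of_lt_of_le (by norm_num) hd
    exact ne_of_gt this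
  exact hd0 h2.symm

open MvPolynomial in
lemma qprod_not_square {d n : ℕ} (hd : 2 ≤ d) (x : Fin n → Fin d → ℝ)
    (hgen : ∀ S : MvPolynomial (Fin n × Fin d) ℤ, S ≠ 0 →
      MvPolynomial.aeval (fun p : Fin n × Fin d => x p.1 p.2) S ≠ 0)
    {E : Finset (Fin n × Fin n)} (hE : ∀ e ∈ E, e.1 < e.2)
    {T : Finset (Fin n × Fin n)} (hT : T ⊆ E) (hTne : T.Nonempty)
    {a b : MvPolynomial (Fin n × Fin d) ℤ} (hb : b ≠ 0) :
    a ^ 2 ≠ (∏ e ∈ T, qpoly d n e) * b ^ 2 := by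
  classical
  intro heq
  obtain ⟨e₀, he₀⟩ := hTne
  have hprime := qpoly_prime hd x hgen e₀ (hE e₀ (hT he₀))
  have hsplit : ∏ e ∈ T, qpoly d n e = qpoly d n e₀ * ∏ e ∈ T.erase e₀, qpoly d n e :=
    (Finset.mul_prod_erase T _ he₀).symm
  have hndvd : ¬ qpoly d n e₀ ∣ ∏ e ∈ T.erase e₀, qpoly d n e := by
    rw [Prime.dvd_finset_prod_iff hprime]
    rintro ⟨e, he, hdvd⟩
    have hee : e₀ ≠ e := Ne.symm (Finset.mem_erase.1 he).1
    exact qpoly_not_dvd hd (hE e₀ (hT he₀)) (hE e (hT (Finset.mem_of_mem_erase he))) hee hdvd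
  exact descent hprime hndvd b hb a (by rw [heq, hsplit])

end GenericVanish

/-- (Lemma 6 of the paper.) Let
`f = Σ_{F ∈ P(E)} P_F · ∏_{uv ∈ F} D_{u,v}` on `ℝ^{nd}` (`d ≥ 2`), where `E` is a set of
unordered pairs of distinct vertices, each `P_F` is a rational function with integer
coefficients, and `D_{u,v}(x) = ‖x_u − x_v‖`. If `f` vanishes at some generic point
`x ∈ ℝ^{nd}` then all the coefficient functions `P_F` are zero, i.e. `f` is identically
zero on its domain. -/
theorem generic_vanishing_implies_zero_coefficients
    (d n : ℕ) (hd : 2 ≤ d) (hn : 2 ≤ n)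
    (E : Finset (Fin n × Fin n)) (hE : ∀ e ∈ E, e.1 < e.2)
    (num den : Finset (Fin n × Fin n) → MvPolynomial (Fin n × Fin d) ℤ)
    (hden : ∀ F ∈ E.powerset, den F ≠ 0)
    (x : Fin n → Fin d → ℝ)
    (hgen : ∀ S : MvPolynomial (Fin n × Fin d) ℤ, S ≠ 0 →
      MvPolynomial.aeval (fun p : Fin n × Fin d => x p.1 p.2) S ≠ 0)
    (hf : ∑ F ∈ E.powerset,
        (MvPolynomial.aeval (fun p : Fin n × Fin d => x p.1 p.2) (num F)
            / MvPolynomial.aeval (fun p : Fin n × Fin d => x p.1 p.2) (den F))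
          * ∏ e ∈ F, Real.sqrt (∑ j : Fin d, (x e.1 j - x e.2 j) ^ 2) = 0) :
    ∀ F ∈ E.powerset, num F = 0 := by
  classical
  open GenericVanish in
  intro F hF
  set x' : Fin n × Fin d → ℝ := fun p => x p.1 p.2 with hx'
  set g : MvPolynomial (Fin n × Fin d) ℤ →+* ℝ := (MvPolynomial.aeval x').toRingHom with hg
  have hgapp : ∀ p : MvPolynomial (Fin n × Fin d) ℤ, g p = MvPolynomial.aeval x' p :=
    fun p => rfl
  have hginj : Function.Injective g := by
    rw [injective_iff_map_eq_zero]
    intro S hS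
    by_contra h
    exact hgen S h (by rw [← hgapp]; exact hS)
  let ψ : FractionRing (MvPolynomial (Fin n × Fin d) ℤ) →+* ℝ := IsFractionRing.lift hginj
  set K : Subfield ℝ := ψ.fieldRange with hK
  have hgK : ∀ p : MvPolynomial (Fin n × Fin d) ℤ, g p ∈ K := by
    intro p
    exact ⟨algebraMap _ _ p, IsFractionRing.lift_algebraMap hginj p⟩
  set a : Fin n × Fin n → ℝ :=
    fun e => Real.sqrt (∑ j : Fin d, (x e.1 j - x e.2 j) ^ 2) with ha
  have hsqsum : ∀ e : Fin n × Fin n, (0:ℝ) ≤ ∑ j : Fin d, (x e.1 j - x e.2 j) ^ 2 :=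
    fun e => Finset.sum_nonneg fun j _ => sq_nonneg _
  have hasq : ∀ e : Fin n × Fin n, (a e) ^ 2 = g (qpoly d n e) := by
    intro e
    rw [ha, Real.sq_sqrt (hsqsum e), hgapp, aeval_qpoly]
  have hsq : ∀ e ∈ E, (a e) ^ 2 ∈ K := fun e _ => (hasq e) ▸ hgK _
  have hne : ∀ T ⊆ E, T.Nonempty → (∏ e ∈ T, a e) ∉ K := by
    rintro T hTE hTne ⟨w, hw⟩
    set R := MvPolynomial (Fin n × Fin d) ℤ
    set β : R →+* FractionRing R := algebraMap R (FractionRing R) with hβ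
    have hsq2 : ψ (w ^ 2) = ψ (β (∏ e ∈ T, qpoly d n e)) := by
      rw [map_pow, hw]
      rw [show ψ (β (∏ e ∈ T, qpoly d n e)) = g (∏ e ∈ T, qpoly d n e) from
        IsFractionRing.lift_algebraMap hginj _]
      rw [← Finset.prod_pow, Finset.prod_congr rfl (fun e _ => hasq e), ← map_prod]
    have hw2 : w ^ 2 = β (∏ e ∈ T, qpoly d n e) := ψ.injective hsq2
    obtain ⟨aa, bb, hbb, hwd⟩ := IsFractionRing.div_surjective (A := R) w
    have hbbne : bb ≠ 0 := nonZeroDivisors.ne_zero hbb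
    have hbb0 : β bb ≠ 0 := by
      intro h
      exact hbbne ((IsFractionRing.injective R (FractionRing R)) (by rw [h, map_zero]))
    have key : β (aa ^ 2) = β ((∏ e ∈ T, qpoly d n e) * bb ^ 2) := by
      have hwd' : β aa = w * β bb := by
        rw [← hwd]
        exact (div_mul_cancel₀ _ hbb0).symm
      rw [map_pow, map_mul, map_pow, hwd', mul_pow, hw2]
    have hfin : aa ^ 2 = (∏ e ∈ T, qpoly d n e) * bb ^ 2 :=
      IsFractionRing.injective R (FractionRing R) key
    exact qprod_not_square hd x hgen hE hTE hTne hbbne hfin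
  obtain ⟨L, -, -⟩ := multiquad_ind K a E hsq hne
  set c : Finset (Fin n × Fin n) → ℝ := fun G =>
    MvPolynomial.aeval x' (num G) / MvPolynomial.aeval x' (den G) with hc
  have hcK : ∀ T ∈ E.powerset, c T ∈ K := by
    intro T _
    rw [hc]
    exact K.div_mem (by rw [← hgapp]; exact hgK (num T)) (by rw [← hgapp]; exact hgK (den T))
  have hrel : ∑ G ∈ E.powerset, c G * ∏ e ∈ G, a e = 0 := hf
  have hzero := L c hcK hrel F hF
  have hdenne : MvPolynomial.aeval x' (den F) ≠ 0 := hgen (den F) (hden F hF)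
  rw [hc] at hzero
  rcases div_eq_zero_iff.1 hzero with h | h
  · by_contra hnum
    exact hgen (num F) hnum h
  · exact absurd h hdenne
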